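/- An n × n matrix A over T with all entries ⪯ 0^ν, each of whose columns contains either at least two entries equal to 0 or at least one entry equal to 0^ν, is tropically singular. -/

import Mathlib

/-- The extended tropical semiring `T = ℝ ∪ ℝ^ν ∪ {-∞}`:
`bot` is `-∞`, `real a` is the real element `a`, `ghost a` is `a^ν`. -/
inductive T : Type where
  | bot : T
  | real : ℝ → T
  | ghost : ℝ → T

namespace T

noncomputable section

/-- Tropical addition `⊕` (max with respect to `-∞ ≺ a ≺ a^ν`, ties become ghosts). -/
def add : T → T → T
  | bot, y => y
  | real a, bot => real a
  | ghost a, bot => ghost a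
  | real a, real b => if a < b then real b else if b < a then real a else ghost a
  | real a, ghost b => if b < a then real a else ghost b
  | ghost a, real b => if a < b then real b else ghost a
  | ghost a, ghost b => ghost (max a b)

/-- Tropical multiplication `⊙` (addition of underlying reals, ghosts absorb). -/
def mul : T → T → T
  | bot, _ => bot
  | real _, bot => bot
  | ghost _, bot => bot
  | real a, real b => real (a + b)
  | real a, ghost b => ghost (a + b)
  | ghost a, real b => ghost (a + b)
  | ghost a, ghost b => ghost (a + b)

/-- The total order `⪯` on `T`: `-∞` least, order of reals, `a ≺ a^ν`. -/
def le : T → T → Prop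
  | bot, _ => True
  | real _, bot => False
  | real a, real b => a ≤ b
  | real a, ghost b => a ≤ b
  | ghost _, bot => False
  | ghost a, real b => a < b
  | ghost a, ghost b => a ≤ b

/-- Membership in the ghost ideal `U̅ = U ∪ {-∞}`. -/
def IsGhost : T → Prop
  | bot => True
  | real _ => False
  | ghost _ => True

/-- Membership in `ℝ ∪ {-∞}` (non-ghost elements). -/
def RealOrBot : T → Prop
  | bot => True
  | real _ => True
  | ghost _ => False

/-- The ghost map `ν`. -/
def nu : T → T
  | bot => bot
  | real a => ghost a
  | ghost a => ghost a

/-- Tropical sum of a list. -/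
def sumList : List T → T := fun l => l.foldr add bot

/-- Tropical sum over a finite index set. -/
def sum {α : Type*} (s : Finset α) (f : α → T) : T := sumList (s.toList.map f)

/-- Tropical product of a list. -/
def prodList : List T → T := fun l => l.foldr mul (real 0)

/-- The weight of a permutation `σ` in a matrix: `a_{1,σ(1)} ⊙ ⋯ ⊙ a_{n,σ(n)}`. -/
def permProd {n : ℕ} (A : Matrix (Fin n) (Fin n) T) (σ : Equiv.Perm (Fin n)) : T :=
  prodList ((List.finRange n).map fun i => A i (σ i))

/-- The tropical determinant (permanent) `|A| = ⨁_σ a_{1,σ(1)} ⊙ ⋯ ⊙ a_{n,σ(n)}`. -/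
def det {n : ℕ} (A : Matrix (Fin n) (Fin n) T) : T :=
  sum (Finset.univ : Finset (Equiv.Perm (Fin n))) (fun σ => permProd A σ)

/-- Tropical dependence of a family of `m` vectors in `T^(n)`:
some tropical linear combination with coefficients in `ℝ ∪ {-∞}`, not all `-∞`,
lands in the ghost part `U̅^(n)`. -/
def Dependent {m n : ℕ} (v : Fin m → Fin n → T) : Prop :=
  ∃ α : Fin m → T, (∀ i, RealOrBot (α i)) ∧ (∃ i, α i ≠ bot) ∧
    ∀ j, IsGhost (sum Finset.univ fun i => mul (α i) (v i j))

/-- The tropical rank: maximal number of tropically independent rows. -/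
def rk {m n : ℕ} (A : Matrix (Fin m) (Fin n) T) : ℕ :=
  sSup {k | ∃ f : Fin k → Fin m, Function.Injective f ∧ ¬ Dependent (fun i => A (f i))}

end

end T

namespace T

lemma my_le_trans : ∀ x y z : T, le x y → le y z → le x z := by
  intro x y z; cases x <;> cases y <;> cases z <;> simp [le] <;> intros <;> linarith

lemma le_add_r : ∀ x y : T, le y (add x y) := by
  intro x y
  cases x <;> cases y <;> simp [le, add] <;> (try split_ifs) <;>
    (try simp [le, le_max_right]) <;> (first | tauto | linarith)

lemma add_mono : ∀ x y z : T, le y z → le (add x y) (add x z) := by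
  intro x y z h
  rcases x with _|a|a <;> rcases y with _|b|b <;> rcases z with _|c|c <;>
    (try simp_all [le, add]) <;> (try split_ifs) <;> (try simp_all [le]) <;>
    (first | tauto | linarith |
      (rcases le_total b a with h'|h' <;> [left; right] <;> linarith))

lemma my_add_comm : ∀ x y : T, add x y = add y x := by
  intro x y
  cases x <;> cases y <;> simp [add] <;> (try split_ifs) <;>
    first | rfl | linarith | (congr 1 <;> linarith) | (simp [max_comm])

lemma sumList_cons (x : T) (l : List T) : sumList (x :: l) = add x (sumList l) := rfl

lemma mem_le_sum {x : T} {l : List T} (h : x ∈ l) : le x (sumList l) := by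
  induction l with
  | nil => simp at h
  | cons a l ih =>
    rcases List.mem_cons.mp h with rfl | h'
    · rw [sumList_cons, my_add_comm]; exact le_add_r _ _
    · exact my_le_trans _ _ _ (ih h') (le_add_r a _)

lemma pair_le_sum {x y : T} {s t : List T} (h : y ∈ s ∨ y ∈ t) :
    le (add x y) (sumList (s ++ x :: t)) := by
  induction s with
  | nil =>
    simp only [List.nil_append, sumList_cons]
    rcases h with h | h
    · simp at h
    · exact add_mono _ _ _ (mem_le_sum h)
  | cons a s ih =>
    simp only [List.cons_append, sumList_cons]
    rcases h with h | h
    · rcases List.mem_cons.mp h with rfl | h'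
      · rw [my_add_comm x y]
        exact add_mono _ _ _ (mem_le_sum (by simp))
      · exact my_le_trans _ _ _ (ih (Or.inl h')) (le_add_r _ _)
    · exact my_le_trans _ _ _ (ih (Or.inr h)) (le_add_r _ _)

lemma sumList_real_mem {l : List T} {v : ℝ} (h : sumList l = real v) : real v ∈ l := by
  induction l with
  | nil => simp [sumList] at h
  | cons a l ih =>
    rw [sumList_cons] at h
    rcases a with _|b|b <;> rcases hs : sumList l with _|c|c <;>
      rw [hs] at h <;> simp [add] at h <;> (try split_ifs at h) <;>
      simp_all <;> tauto

lemma prodList_cons (x : T) (l : List T) : prodList (x :: l) = mul x (prodList l) := rfl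

lemma prod_real_exists : ∀ (k : ℕ) (f : Fin k → T) (v : ℝ),
    prodList ((List.finRange k).map f) = real v →
    ∃ a : Fin k → ℝ, (∀ i, f i = real (a i)) ∧ v = ∑ i, a i := by
  intro k
  induction k with
  | zero =>
    intro f v h
    refine ⟨fun i => 0, fun i => i.elim0, ?_⟩
    simp [prodList] at h ⊢
    simp [h]
  | succ k ih =>
    intro f v h
    rw [List.finRange_succ, List.map_cons, prodList_cons, List.map_map] at h
    rcases hf0 : f 0 with _|b|b <;>
      rcases hp : prodList (List.map (f ∘ Fin.succ) (List.finRange k)) with _|c|c <;>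
      rw [hf0, hp] at h <;> simp [mul] at h
    obtain ⟨a, ha, hsum⟩ := ih (f ∘ Fin.succ) c hp
    refine ⟨Fin.cons b a, fun i => ?_, ?_⟩
    · refine Fin.cases ?_ (fun j => ?_) i
      · simpa using hf0
      · simpa using ha j
    · rw [Fin.sum_univ_succ]
      simp [← h, hsum]

lemma prod_mixed : ∀ (k : ℕ) (f : Fin k → T) (b : Fin k → ℝ),
    (∀ i, f i = real (b i) ∨ f i = ghost (b i)) →
    prodList ((List.finRange k).map f) = real (∑ i, b i) ∨
    prodList ((List.finRange k).map f) = ghost (∑ i, b i) := by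
  intro k
  induction k with
  | zero => intro f b h; left; simp [prodList]
  | succ k ih =>
    intro f b h
    rw [List.finRange_succ, List.map_cons, prodList_cons, List.map_map]
    rcases ih (f ∘ Fin.succ) (b ∘ Fin.succ) (fun i => h i.succ) with hp | hp <;>
      rcases h 0 with h0 | h0 <;> rw [hp, h0] <;>
      simp [mul, Fin.sum_univ_succ]

end T

lemma exists_cycle_set {m : ℕ} (g : Fin (m + 1) → Fin (m + 1)) :
    ∃ S : Finset (Fin (m + 1)), S.Nonempty ∧ (∀ j ∈ S, g j ∈ S) ∧
      (∀ j ∈ S, ∃ j' ∈ S, g j' = j) ∧ Set.InjOn g ↑S := by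
  have hni : ¬ Function.Injective (fun k : Fin (m + 2) => g^[(k : ℕ)] 0) := by
    intro hinj
    have := Fintype.card_le_of_injective _ hinj
    simp at this
  obtain ⟨k₁, k₂, hkk, hne⟩ := Function.not_injective_iff.mp hni
  wlog hlt : (k₁ : ℕ) < (k₂ : ℕ) generalizing k₁ k₂
  · exact this k₂ k₁ hkk.symm hne.symm
      (lt_of_le_of_ne (not_lt.mp hlt) (fun h => hne (Fin.ext h.symm)))
  set y := g^[(k₁ : ℕ)] (0 : Fin (m+1)) with hy
  set p := (k₂ : ℕ) - (k₁ : ℕ) with hp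
  have hppos : 0 < p := Nat.sub_pos_of_lt hlt
  have hper : g^[p] y = y := by
    rw [hy, ← Function.iterate_add_apply]
    rw [hp, Nat.sub_add_cancel hlt.le]
    exact hkk.symm
  set S := (Finset.range p).image (fun k => g^[k] y) with hS
  have hyS : y ∈ S :=
    Finset.mem_image.mpr ⟨0, Finset.mem_range.mpr hppos, rfl⟩
  have hclosed : ∀ j ∈ S, g j ∈ S := by
    intro j hj
    obtain ⟨k, hk, rfl⟩ := Finset.mem_image.mp hj
    rw [Finset.mem_range] at hk
    have hit : g ((fun k => g^[k] y) k) = g^[k+1] y :=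
      (Function.iterate_succ_apply' g k y).symm
    rw [hit]
    rcases Nat.lt_or_ge (k + 1) p with h | h
    · exact Finset.mem_image.mpr ⟨k + 1, Finset.mem_range.mpr h, rfl⟩
    · have hkp : k + 1 = p := le_antisymm hk h
      rw [hkp, hper]; exact hyS
  have hsurj : ∀ j ∈ S, ∃ j' ∈ S, g j' = j := by
    intro j hj
    obtain ⟨k, hk, rfl⟩ := Finset.mem_image.mp hj
    rw [Finset.mem_range] at hk
    rcases Nat.eq_zero_or_pos k with rfl | hkpos
    · refine ⟨g^[p-1] y, Finset.mem_image.mpr ⟨p-1, Finset.mem_range.mpr (by omega), rfl⟩, ?_⟩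
      show g (g^[p-1] y) = g^[0] y
      rw [← Function.iterate_succ_apply' g (p-1) y,
        show (p-1).succ = p by omega, hper]
      rfl
    · refine ⟨g^[k-1] y, Finset.mem_image.mpr ⟨k-1, Finset.mem_range.mpr (by omega), rfl⟩, ?_⟩
      show g (g^[k-1] y) = g^[k] y
      rw [← Function.iterate_succ_apply' g (k-1) y]
      congr 1; omega
  have h1 : S.image g ⊆ S := by
    intro x hx
    obtain ⟨j, hj, rfl⟩ := Finset.mem_image.mp hx
    exact hclosed j hj
  have h2 : S ⊆ S.image g := by
    intro x hx
    obtain ⟨j', hj', hgj⟩ := hsurj x hx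
    exact Finset.mem_image.mpr ⟨j', hj', hgj⟩
  have heq : S.image g = S := le_antisymm h1 h2
  exact ⟨S, ⟨y, hyS⟩, hclosed, hsurj, Finset.injOn_of_card_image_eq (by rw [heq])⟩


/-- a matrix `⪯ 0^ν` each of whose columns contains either two
`0`-entries or a `0^ν`-entry is tropically singular. -/
theorem stmt11 {n : ℕ} (A : Matrix (Fin (n + 1)) (Fin (n + 1)) T)
    (hle : ∀ i j, T.le (A i j) (T.ghost 0))
    (hcol : ∀ j, (∃ i₁ i₂, i₁ ≠ i₂ ∧ A i₁ j = T.real 0 ∧ A i₂ j = T.real 0) ∨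
      ∃ i, A i j = T.ghost 0) :
    T.IsGhost (T.det A) := by
  classical
  by_contra hng
  obtain ⟨v, hdet⟩ : ∃ v, T.det A = T.real v := by
    rcases h : T.det A with _|v|v
    · exact absurd (by rw [h]; trivial) hng
    · exact ⟨v, rfl⟩
    · exact absurd (by rw [h]; trivial) hng
  have hdet' : T.sumList (((Finset.univ : Finset (Equiv.Perm (Fin (n+1)))).toList).map
      (fun σ => T.permProd A σ)) = T.real v := hdet
  obtain ⟨σ, hσmem, hσ⟩ := List.mem_map.mp (T.sumList_real_mem hdet')
  obtain ⟨a, ha, hv⟩ := T.prod_real_exists (n+1) (fun i => A i (σ i)) v hσ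
  have hai : ∀ i, a i ≤ 0 := by
    intro i
    have h1 := hle i (σ i)
    rw [ha i] at h1
    exact h1
  have hwex : ∀ j, ∃ i, i ≠ σ.symm j ∧ (A i j = T.real 0 ∨ A i j = T.ghost 0) := by
    intro j
    have hAj : A (σ.symm j) j = T.real (a (σ.symm j)) := by
      have := ha (σ.symm j); rwa [Equiv.apply_symm_apply] at this
    rcases hcol j with ⟨i₁, i₂, hne, h1, h2⟩ | ⟨i, hi⟩
    · by_cases hc : i₁ = σ.symm j
      · exact ⟨i₂, fun hc2 => hne (hc.trans hc2.symm), Or.inl h2⟩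
      · exact ⟨i₁, hc, Or.inl h1⟩
    · refine ⟨i, fun hc => ?_, Or.inr hi⟩
      rw [hc, hAj] at hi
      exact absurd hi (by simp)
  choose w hw1 hw2 using hwex
  set g : Fin (n+1) → Fin (n+1) := fun j => σ (w j) with hg
  have hgne : ∀ j, g j ≠ j := by
    intro j h
    exact hw1 j ((Equiv.eq_symm_apply σ).mpr h)
  obtain ⟨S, ⟨y, hyS⟩, hclosed, hsurj, hinjS⟩ := exists_cycle_set g
  set r : Fin (n+1) → Fin (n+1) := fun j => if j ∈ S then w j else σ.symm j with hrdef
  have hrS : ∀ j ∈ S, r j = w j := fun j hj => by simp [hrdef, hj]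
  have hrn : ∀ j, j ∉ S → r j = σ.symm j := fun j hj => by simp [hrdef, hj]
  have hrinj : Function.Injective r := by
    intro j₁ j₂ hr
    by_cases h1 : j₁ ∈ S <;> by_cases h2 : j₂ ∈ S
    · rw [hrS j₁ h1, hrS j₂ h2] at hr
      exact hinjS (Finset.mem_coe.mpr h1) (Finset.mem_coe.mpr h2) (by simp [hg, hr])
    · rw [hrS j₁ h1, hrn j₂ h2] at hr
      exfalso
      have hgj : g j₁ = j₂ := by simp [hg, hr]
      exact h2 (hgj ▸ hclosed j₁ h1)
    · rw [hrn j₁ h1, hrS j₂ h2] at hr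
      exfalso
      have hgj : g j₂ = j₁ := by simp [hg, ← hr]
      exact h1 (hgj ▸ hclosed j₂ h2)
    · rw [hrn j₁ h1, hrn j₂ h2] at hr
      exact σ.symm.injective hr
  have hrbij := Finite.injective_iff_bijective.mp hrinj
  set σ' : Equiv.Perm (Fin (n+1)) := (Equiv.ofBijective r hrbij).symm with hσ'def
  have hrσ' : ∀ i, r (σ' i) = i := fun i => (Equiv.ofBijective r hrbij).apply_symm_apply i
  have hσ'wy : σ' (w y) = y := by
    have h2 : (Equiv.ofBijective r hrbij) y = w y := hrS y hyS
    rw [hσ'def, ← h2]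
    exact (Equiv.ofBijective r hrbij).symm_apply_apply y
  have hσne : σ' ≠ σ := by
    intro h
    apply hgne y
    have : σ (w y) = y := by rw [← h]; exact hσ'wy
    simpa [hg] using this
  set b : Fin (n+1) → ℝ := fun i => if σ' i ∈ S then 0 else a i with hb
  have hbent : ∀ i, A i (σ' i) = T.real (b i) ∨ A i (σ' i) = T.ghost (b i) := by
    intro i
    by_cases hiS : σ' i ∈ S
    · have hwi : w (σ' i) = i := by rw [← hrS _ hiS]; exact hrσ' i
      have h2 := hw2 (σ' i)
      rw [hwi] at h2
      simpa [hb, hiS] using h2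
    · have hsi : σ.symm (σ' i) = i := by rw [← hrn _ hiS]; exact hrσ' i
      have hσi : σ' i = σ i := by
        have h4 := congrArg σ hsi
        rw [Equiv.apply_symm_apply] at h4
        exact h4
      rw [hσi]
      simp only [hb, hiS, if_neg hiS]
      exact Or.inl (ha i)
  have hba : ∀ i, a i ≤ b i := by
    intro i
    by_cases hiS : σ' i ∈ S <;> simp [hb, hiS, hai i]
  have hvb : v ≤ ∑ i, b i := by
    rw [hv]; exact Finset.sum_le_sum (fun i _ => hba i)
  have hmix : T.permProd A σ' = T.real (∑ i, b i) ∨ T.permProd A σ' = T.ghost (∑ i, b i) :=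
    T.prod_mixed (n+1) (fun i => A i (σ' i)) b hbent
  obtain ⟨s, t, hlst⟩ := List.append_of_mem hσmem
  have hσ'mem : σ' ∈ s ∨ σ' ∈ t := by
    have hm : σ' ∈ ((Finset.univ : Finset (Equiv.Perm (Fin (n+1)))).toList) :=
      Finset.mem_toList.mpr (Finset.mem_univ _)
    rw [hlst] at hm
    rcases List.mem_append.mp hm with h | h
    · exact Or.inl h
    · rcases List.mem_cons.mp h with h | h
      · exact absurd h hσne
      · exact Or.inr h
  have hmem' : T.permProd A σ' ∈ (s.map (fun σ => T.permProd A σ)) ∨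
      T.permProd A σ' ∈ (t.map (fun σ => T.permProd A σ)) := by
    rcases hσ'mem with h | h
    · exact Or.inl (List.mem_map.mpr ⟨σ', h, rfl⟩)
    · exact Or.inr (List.mem_map.mpr ⟨σ', h, rfl⟩)
  have hl : (((Finset.univ : Finset (Equiv.Perm (Fin (n+1)))).toList).map
      (fun σ => T.permProd A σ)) =
      (s.map (fun σ => T.permProd A σ)) ++ T.real v :: (t.map (fun σ => T.permProd A σ)) := by
    rw [hlst, List.map_append, List.map_cons, hσ]
  have hpair : T.le (T.add (T.real v) (T.permProd A σ')) (T.real v) := by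
    have h3 := T.pair_le_sum (x := T.real v) hmem'
    rw [← hl, hdet'] at h3
    exact h3
  rcases hmix with hm | hm <;> rw [hm] at hpair <;>
    simp only [T.add] at hpair <;> split_ifs at hpair <;>
    simp only [T.le] at hpair <;> linarith
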